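/- Let d be a positive integer and γ ∈ (0, ∞), α ∈ (0, ∞). Let (M, dist) be a compact metric space with at least two points and let vol be a finite Borel measure on M with vol(M) > 0 satisfying the uniform volume-density condition: sup_{p∈M} |vol(B(p,r))/(ω_d r^d) − 1| → 0 as r → 0+. Let X_1, X_2, … be i.i.d. random variables with law vol/vol(M) and set P_n = {X_1, …, X_n}. Then there exist constants 0 < c ≤ C such that for every positive integer n: c·n^{−α/d} ≤ E[ ( ∫_M dist(x, P_n)^γ dvol(x) )^{α/γ} ] ≤ C·n^{−α/d}. -/

import Mathlib

open MeasureTheory Metric ProbabilityTheory Filter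
open scoped ENNReal

/-- The Lebesgue volume of the Euclidean unit ball in `ℝ^d`. -/
noncomputable def unitBallVol (d : ℕ) : ℝ :=
  (volume (ball (0 : EuclideanSpace ℝ (Fin d)) 1)).toReal

section Aux

lemma measurable_finset_inf' {δ : Type*} [MeasurableSpace δ] {n : ℕ} (hn : 0 < n)
    (f : ℕ → δ → ℝ) (hf : ∀ i, Measurable (f i)) :
    Measurable (fun x => (Finset.range n).inf' (Finset.nonempty_range_iff.2 hn.ne')
      (fun i => f i x)) := by
  induction n with
  | zero => omega
  | succ m ih =>
    rcases Nat.eq_zero_or_pos m with hm | hm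
    · subst hm; simpa using hf 0
    · have h1 : ∀ x, (Finset.range (m+1)).inf' (Finset.nonempty_range_iff.2 (Nat.succ_ne_zero m))
          (fun i => f i x)
          = min (f m x) ((Finset.range m).inf' (Finset.nonempty_range_iff.2 hm.ne')
            (fun i => f i x)) := by
        intro x
        apply le_antisymm
        · refine le_min (Finset.inf'_le _ (by simp)) ?_
          exact Finset.le_inf' _ _ fun i hi => Finset.inf'_le _ (by simp at hi ⊢; omega)
        · refine Finset.le_inf' _ _ fun i hi => ?_
          simp only [Finset.mem_range] at hi
          rcases Nat.lt_succ_iff_lt_or_eq.mp hi with h | h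
          · exact le_trans (min_le_right _ _) (Finset.inf'_le _ (Finset.mem_range.mpr h))
          · subst h; exact min_le_left _ _
      simp_rw [h1]
      exact (hf m).min (ih hm)

lemma infDist_image_Iio {M : Type*} [MetricSpace M] (f : ℕ → M) {n : ℕ} (hn : 0 < n) (x : M) :
    infDist x (f '' Set.Iio n) =
      (Finset.range n).inf' (Finset.nonempty_range_iff.2 hn.ne') (fun i => dist x (f i)) := by
  have hne : (f '' Set.Iio n).Nonempty := ⟨f 0, 0, hn, rfl⟩
  apply le_antisymm
  · obtain ⟨i, hi, hinf⟩ := Finset.exists_mem_eq_inf' (Finset.nonempty_range_iff.2 hn.ne')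
      (fun i => dist x (f i))
    rw [hinf]
    exact infDist_le_dist_of_mem ⟨i, Finset.mem_range.mp hi, rfl⟩
  · by_contra h
    push_neg at h
    obtain ⟨y, ⟨i, hi, rfl⟩, hy⟩ := (infDist_lt_iff hne).mp h
    exact absurd hy (not_lt.2 (Finset.inf'_le _ (Finset.mem_range.mpr hi)))

lemma summable_aux (β : ℝ) {κ : ℝ} (hκ : 0 < κ) :
    Summable (fun j : ℕ => ((j : ℝ) + 1) ^ β * Real.exp (-(κ * j))) := by
  have htend : Tendsto (fun j : ℕ => ((j : ℝ) + 1) ^ β * Real.exp (-(κ/2) * ((j : ℝ) + 1)))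
      atTop (nhds 0) := by
    have h1 := tendsto_rpow_mul_exp_neg_mul_atTop_nhds_zero β (κ/2) (by positivity)
    have h2 : Tendsto (fun j : ℕ => (j : ℝ) + 1) atTop atTop :=
      tendsto_atTop_add_const_right _ _ tendsto_natCast_atTop_atTop
    exact h1.comp h2
  obtain ⟨B, hB⟩ := htend.bddAbove_range
  have hBmem : ∀ j : ℕ, ((j : ℝ) + 1) ^ β * Real.exp (-(κ/2) * ((j : ℝ) + 1)) ≤ B := by
    intro j; exact hB (Set.mem_range_self j)
  have hB0 : 0 ≤ B := le_trans (by positivity) (hBmem 0)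
  have hsum : Summable (fun j : ℕ => (B * Real.exp (κ/2)) * Real.exp (-(κ/2)) ^ j) :=
    (summable_geometric_of_lt_one (Real.exp_nonneg _)
      (Real.exp_lt_one_iff.2 (by linarith))).mul_left _
  refine hsum.of_nonneg_of_le (fun j => by positivity) (fun j => ?_)
  have key : ((j : ℝ) + 1) ^ β * Real.exp (-(κ * j))
      = (((j : ℝ) + 1) ^ β * Real.exp (-(κ/2) * ((j : ℝ) + 1))) *
        (Real.exp (κ/2) * Real.exp (-(κ/2)) ^ j) := by
    have h3 : Real.exp (-(κ * j)) = Real.exp (-(κ/2) * ((j:ℝ)+1)) *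
        (Real.exp (κ/2) * Real.exp (-(κ/2)) ^ j) := by
      rw [← Real.exp_nat_mul, ← Real.exp_add, ← Real.exp_add]
      congr 1
      ring
    rw [h3]
    ring
  rw [key]
  have h2 : (0:ℝ) ≤ Real.exp (κ/2) * Real.exp (-(κ/2)) ^ j := by positivity
  calc (((j : ℝ) + 1) ^ β * Real.exp (-(κ/2) * ((j : ℝ) + 1))) *
        (Real.exp (κ/2) * Real.exp (-(κ/2)) ^ j)
      ≤ B * (Real.exp (κ/2) * Real.exp (-(κ/2)) ^ j) := by
        exact mul_le_mul_of_nonneg_right (hBmem j) h2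
    _ = (B * Real.exp (κ/2)) * Real.exp (-(κ/2)) ^ j := by ring

lemma moment_bound {Ω : Type*} [MeasurableSpace Ω] (Pr : Measure Ω) [IsProbabilityMeasure Pr]
    (β : ℝ) (hβ : 0 < β) (d : ℕ) (hd : 0 < d)
    {κ r₀ D : ℝ} (hκ : 0 < κ) (hr₀ : 0 < r₀) (hD : 0 < D) :
    ∃ C : ℝ, 0 < C ∧ ∀ n : ℕ, 0 < n → ∀ Z : Ω → ℝ, Measurable Z →
      (∀ ω, 0 ≤ Z ω) → (∀ ω, Z ω ≤ D) →
      (∀ t : ℝ, 0 < t → t < r₀ →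
        Pr {ω | t ≤ Z ω} ≤ ENNReal.ofReal (Real.exp (-((n : ℝ) * (κ * t ^ d))))) →
      ∫⁻ ω, ENNReal.ofReal (Z ω) ^ β ∂Pr ≤ ENNReal.ofReal (C * (n : ℝ) ^ (-β / (d : ℝ))) := by
  have hm₀ : 0 < κ * (r₀/2) ^ d := by positivity
  set m₀ := κ * (r₀/2) ^ d with hm₀def
  set κs := min κ (m₀ / D) with hκsdef
  have hκs : 0 < κs := lt_min hκ (by positivity)
  have hsum := summable_aux β hκs
  set g : ℕ → ℝ := fun j => ((j : ℝ) + 1) ^ β * Real.exp (-(κs * j)) with hgdef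
  have hg0 : ∀ j, 0 ≤ g j := fun j => by positivity
  set S := ∑' j, g j with hSdef
  have hS0 : 0 < S := by
    have h1 : g 0 ≤ S := hsum.le_tsum 0 (fun j _ => hg0 j)
    have : (0:ℝ) < g 0 := by simp [hgdef]
    linarith
  refine ⟨S, hS0, fun n hn Z hZmeas hZ0 hZD htail => ?_⟩
  have hn1 : (1:ℝ) ≤ (n:ℝ) := by exact_mod_cast hn
  have hnpos : (0:ℝ) < (n:ℝ) := by linarith
  set r : ℝ := (n : ℝ) ^ (-(1:ℝ)/(d:ℝ)) with hrdef
  have hr : 0 < r := Real.rpow_pos_of_pos hnpos _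
  have hdR : (0:ℝ) < (d:ℝ) := by exact_mod_cast hd
  have hrd : (n : ℝ) * r ^ d = 1 := by
    have hne : r ^ d = (n:ℝ)⁻¹ := by
      rw [hrdef, ← Real.rpow_natCast ((n:ℝ) ^ (-(1:ℝ)/(d:ℝ))) d, ← Real.rpow_mul hnpos.le,
        div_mul_cancel₀ _ hdR.ne']
      rw [show (-1 : ℝ) = -(1:ℝ) from rfl, Real.rpow_neg hnpos.le, Real.rpow_one]
    rw [hne, mul_inv_cancel₀ hnpos.ne']
  have h1rn : (1:ℝ) ≤ r * n := by
    have : r * n = (n:ℝ) ^ (-(1:ℝ)/(d:ℝ) + 1) := by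
      rw [hrdef, Real.rpow_add hnpos, Real.rpow_one]
    rw [this]
    have h2 : (0:ℝ) ≤ -(1:ℝ)/(d:ℝ) + 1 := by
      have h3 : (1:ℝ)/(d:ℝ) ≤ 1 := by
        rw [div_le_one hdR]; exact_mod_cast hd
      rw [neg_div]
      linarith
    calc (1:ℝ) = (n:ℝ) ^ (0:ℝ) := by simp
      _ ≤ (n:ℝ) ^ (-(1:ℝ)/(d:ℝ) + 1) := Real.rpow_le_rpow_of_exponent_le hn1 h2
  have hmeas_set : ∀ t : ℝ, MeasurableSet {ω | t ≤ Z ω} := by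
    intro t
    exact measurableSet_le measurable_const hZmeas
  have htail' : ∀ j : ℕ, Pr {ω | (j:ℝ) * r ≤ Z ω} ≤ ENNReal.ofReal (Real.exp (-(κs * j))) := by
    intro j
    rcases Nat.eq_zero_or_pos j with hj | hj
    · subst hj
      simp only [Nat.cast_zero, mul_zero, neg_zero, Real.exp_zero, ENNReal.ofReal_one]
      exact prob_le_one
    have hj1 : (1:ℝ) ≤ (j:ℝ) := by exact_mod_cast hj
    set t := (j:ℝ) * r with htdef
    have ht : 0 < t := by positivity
    rcases lt_or_ge t r₀ with hc | hc
    · refine le_trans (htail t ht hc) (ENNReal.ofReal_le_ofReal (Real.exp_le_exp.2 ?_))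
      have hjd : (j:ℝ) ≤ (j:ℝ) ^ d := le_self_pow₀ hj1 hd.ne'
      have : (n:ℝ) * (κ * t ^ d) = κ * (j:ℝ)^d := by
        rw [htdef, mul_pow]
        calc (n:ℝ) * (κ * ((j:ℝ)^d * r^d)) = κ * (j:ℝ)^d * ((n:ℝ) * r^d) := by ring
          _ = κ * (j:ℝ)^d := by rw [hrd, mul_one]
      rw [this]
      have h4 : κs * j ≤ κ * j := mul_le_mul_of_nonneg_right (min_le_left _ _) (by positivity)
      have h5 : κ * j ≤ κ * (j:ℝ)^d := mul_le_mul_of_nonneg_left hjd hκ.le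
      linarith
    · rcases le_or_gt t D with hcD | hcD
      · have hsub : {ω | t ≤ Z ω} ⊆ {ω | r₀/2 ≤ Z ω} := by
          intro ω hω
          have : r₀ / 2 < t := by linarith
          exact le_trans this.le hω
        refine le_trans (measure_mono hsub) ?_
        refine le_trans (htail (r₀/2) (by positivity) (by linarith)) ?_
        refine ENNReal.ofReal_le_ofReal (Real.exp_le_exp.2 ?_)
        have hjD : (j:ℝ) ≤ D / r := by
          rw [le_div_iff₀ hr]; linarith [htdef ▸ hcD]
        have h6 : κs * j ≤ (m₀ / D) * j :=
          mul_le_mul_of_nonneg_right (min_le_right _ _) (by positivity)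
        have h7 : (m₀ / D) * j ≤ (m₀ / D) * (D / r) :=
          mul_le_mul_of_nonneg_left hjD (by positivity)
        have h8 : (m₀ / D) * (D / r) = m₀ / r := by
          field_simp
        have h9 : m₀ / r ≤ m₀ * n := by
          rw [div_le_iff₀ hr]
          calc m₀ * (n:ℝ) * r = m₀ * (r * n) := by ring
            _ ≥ m₀ * 1 := by
              exact mul_le_mul_of_nonneg_left h1rn hm₀.le
            _ = m₀ := mul_one _
        have : (n:ℝ) * (κ * (r₀/2) ^ d) = m₀ * n := by rw [hm₀def]; ring
        rw [this]
        linarith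
      · have : {ω | t ≤ Z ω} = ∅ := by
          ext ω
          simp only [Set.mem_setOf_eq, Set.mem_empty_iff_false, iff_false, not_le]
          exact lt_of_le_of_lt (hZD ω) hcD
        rw [this]
        simp
  set F : ℕ → Ω → ENNReal := fun j =>
    Set.indicator {ω | (j:ℝ) * r ≤ Z ω} (fun _ => ENNReal.ofReal ((((j:ℝ) + 1) * r) ^ β)) with hFdef
  have hpt : ∀ ω, ENNReal.ofReal (Z ω) ^ β ≤ ∑' j, F j ω := by
    intro ω
    set j₀ := ⌊Z ω / r⌋₊ with hj₀def
    have hfl : (j₀ : ℝ) * r ≤ Z ω := by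
      rw [← le_div_iff₀ hr]
      exact Nat.floor_le (div_nonneg (hZ0 ω) hr.le)
    have hfu : Z ω ≤ ((j₀ : ℝ) + 1) * r := by
      rw [← div_le_iff₀ hr]
      exact (Nat.lt_floor_add_one _).le
    have hF : F j₀ ω = ENNReal.ofReal ((((j₀:ℝ) + 1) * r) ^ β) := by
      exact Set.indicator_of_mem (show ω ∈ {ω | (j₀:ℝ) * r ≤ Z ω} from hfl) _
    calc ENNReal.ofReal (Z ω) ^ β = ENNReal.ofReal (Z ω ^ β) :=
          ENNReal.ofReal_rpow_of_nonneg (hZ0 ω) hβ.le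
      _ ≤ ENNReal.ofReal ((((j₀:ℝ) + 1) * r) ^ β) :=
          ENNReal.ofReal_le_ofReal (Real.rpow_le_rpow (hZ0 ω) hfu hβ.le)
      _ = F j₀ ω := hF.symm
      _ ≤ ∑' j, F j ω := ENNReal.le_tsum j₀
  calc ∫⁻ ω, ENNReal.ofReal (Z ω) ^ β ∂Pr ≤ ∫⁻ ω, ∑' j, F j ω ∂Pr := lintegral_mono hpt
    _ = ∑' j, ∫⁻ ω, F j ω ∂Pr := by
        refine lintegral_tsum (fun j => ?_)
        exact (measurable_const.indicator (hmeas_set _)).aemeasurable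
    _ ≤ ∑' j, ENNReal.ofReal (r ^ β) * ENNReal.ofReal (g j) := by
        refine ENNReal.tsum_le_tsum (fun j => ?_)
        rw [hFdef]
        rw [lintegral_indicator_const (hmeas_set _)]
        calc ENNReal.ofReal ((((j:ℝ) + 1) * r) ^ β) * Pr {ω | (j:ℝ) * r ≤ Z ω}
            ≤ ENNReal.ofReal ((((j:ℝ) + 1) * r) ^ β) * ENNReal.ofReal (Real.exp (-(κs * j))) :=
              mul_le_mul_right (htail' j) _
          _ = ENNReal.ofReal ((((j:ℝ) + 1) * r) ^ β * Real.exp (-(κs * j))) := by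
              rw [ENNReal.ofReal_mul (by positivity)]
          _ = ENNReal.ofReal (r ^ β * g j) := by
              congr 1
              simp only [hgdef]
              rw [Real.mul_rpow (by positivity) hr.le]
              ring
          _ = ENNReal.ofReal (r ^ β) * ENNReal.ofReal (g j) := by
              rw [ENNReal.ofReal_mul (by positivity)]
    _ = ENNReal.ofReal (r ^ β) * ∑' j, ENNReal.ofReal (g j) := ENNReal.tsum_mul_left
    _ = ENNReal.ofReal (r ^ β) * ENNReal.ofReal S := by
        rw [hSdef, ENNReal.ofReal_tsum_of_nonneg hg0 hsum]
    _ = ENNReal.ofReal (S * r ^ β) := by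
        rw [← ENNReal.ofReal_mul (by positivity), mul_comm]
    _ ≤ ENNReal.ofReal (S * (n : ℝ) ^ (-β / (d : ℝ))) := by
        refine ENNReal.ofReal_le_ofReal (le_of_eq ?_)
        congr 1
        rw [hrdef, ← Real.rpow_mul hnpos.le]
        congr 1
        ring

end Aux

/-- for i.i.d. points uniformly distributed with respect to a measure
satisfying the uniform volume-density condition, the moments of the `γ`-distortion
are comparable to `n^{-α/d}`. -/
theorem expected_distortion_two_sided
    {Ω : Type*} [MeasurableSpace Ω] (Pr : Measure Ω) [IsProbabilityMeasure Pr]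
    {M : Type*} [MetricSpace M] [CompactSpace M] [Nontrivial M]
    [MeasurableSpace M] [BorelSpace M]
    (d : ℕ) (hd : 0 < d) (γ α : ℝ) (hγ : 0 < γ) (hα : 0 < α)
    (vol : Measure M) [IsFiniteMeasure vol] (hvolpos : 0 < vol Set.univ)
    (hdens : ∀ ε : ℝ, 0 < ε → ∃ r₀ : ℝ, 0 < r₀ ∧ ∀ r : ℝ, 0 < r → r < r₀ →
      ∀ p : M, |(vol (ball p r)).toReal / (unitBallVol d * r ^ d) - 1| ≤ ε)
    (X : ℕ → Ω → M) (hXmeas : ∀ i, Measurable (X i))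
    (hXlaw : ∀ i, Measure.map (X i) Pr = (vol Set.univ)⁻¹ • vol)
    (hXindep : iIndepFun X Pr) :
    ∃ c C : ℝ, 0 < c ∧ c ≤ C ∧ ∀ n : ℕ, 0 < n →
      ENNReal.ofReal (c * (n : ℝ) ^ (-α / d)) ≤
        (∫⁻ ω, ENNReal.ofReal
          ((∫ x, infDist x ((fun i => X i ω) '' Set.Iio n) ^ γ ∂vol) ^ (α / γ)) ∂Pr) ∧
      (∫⁻ ω, ENNReal.ofReal
          ((∫ x, infDist x ((fun i => X i ω) '' Set.Iio n) ^ γ ∂vol) ^ (α / γ)) ∂Pr)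
        ≤ ENNReal.ofReal (C * (n : ℝ) ^ (-α / d)) := by
  classical
  have hvol_ne_top : vol Set.univ ≠ ∞ := measure_ne_top vol _
  have hvol_ne : vol Set.univ ≠ 0 := hvolpos.ne'
  set V : ℝ := (vol Set.univ).toReal with hVdef
  have hV : 0 < V := ENNReal.toReal_pos hvol_ne hvol_ne_top
  have hωd : 0 < unitBallVol d :=
    ENNReal.toReal_pos (measure_ball_pos volume _ one_pos).ne' measure_ball_lt_top.ne
  have hdR : (0:ℝ) < (d:ℝ) := by exact_mod_cast hd
  obtain ⟨r₀, hr₀, hdens2⟩ := hdens (1/2) (by norm_num)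
  have hball_pos : ∀ r : ℝ, 0 < r → ∀ p : M, (0:ℝ) < unitBallVol d * r ^ d := by
    intro r hr p; positivity
  have hlow : ∀ r : ℝ, 0 < r → r < r₀ → ∀ p : M,
      unitBallVol d * r ^ d / 2 ≤ (vol (ball p r)).toReal := by
    intro r hr hrr p
    have h1 := abs_le.mp (hdens2 r hr hrr p)
    have hb := hball_pos r hr p
    have h2 : 1/2 ≤ (vol (ball p r)).toReal / (unitBallVol d * r ^ d) := by linarith [h1.1]
    calc unitBallVol d * r ^ d / 2 = 1/2 * (unitBallVol d * r ^ d) := by ring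
      _ ≤ (vol (ball p r)).toReal / (unitBallVol d * r ^ d) * (unitBallVol d * r ^ d) :=
          mul_le_mul_of_nonneg_right h2 hb.le
      _ = (vol (ball p r)).toReal := by field_simp
  have hup : ∀ r : ℝ, 0 < r → r < r₀ → ∀ p : M,
      (vol (ball p r)).toReal ≤ 3/2 * (unitBallVol d * r ^ d) := by
    intro r hr hrr p
    have h1 := abs_le.mp (hdens2 r hr hrr p)
    have hb := hball_pos r hr p
    have h2 : (vol (ball p r)).toReal / (unitBallVol d * r ^ d) ≤ 3/2 := by linarith [h1.2]
    calc (vol (ball p r)).toReal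
        = (vol (ball p r)).toReal / (unitBallVol d * r ^ d) * (unitBallVol d * r ^ d) := by
          field_simp
      _ ≤ 3/2 * (unitBallVol d * r ^ d) := mul_le_mul_of_nonneg_right h2 hb.le
  set D : ℝ := Metric.diam (Set.univ : Set M) with hDdef
  have hD : 0 < D := by
    obtain ⟨x, y, hxy⟩ := exists_pair_ne M
    have h1 := Metric.dist_le_diam_of_mem isBounded_of_compactSpace (Set.mem_univ x)
      (Set.mem_univ y)
    have h2 : 0 < dist x y := dist_pos.2 hxy
    linarith
  have hZD : ∀ (n : ℕ), 0 < n → ∀ (ω : Ω) (x : M),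
      infDist x ((fun i => X i ω) '' Set.Iio n) ≤ D := by
    intro n hn ω x
    have h0 : X 0 ω ∈ (fun i => X i ω) '' Set.Iio n := ⟨0, hn, rfl⟩
    exact le_trans (infDist_le_dist_of_mem h0)
      (Metric.dist_le_diam_of_mem isBounded_of_compactSpace (Set.mem_univ _) (Set.mem_univ _))
  have hZmeasω : ∀ (n : ℕ), 0 < n → ∀ x : M,
      Measurable (fun ω => infDist x ((fun i => X i ω) '' Set.Iio n)) := by
    intro n hn x
    have heq : (fun ω => infDist x ((fun i => X i ω) '' Set.Iio n)) =
        fun ω => (Finset.range n).inf' (Finset.nonempty_range_iff.2 hn.ne')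
          (fun i => dist x (X i ω)) :=
      funext fun ω => infDist_image_Iio _ hn x
    rw [heq]
    exact measurable_finset_inf' hn _ (fun i => measurable_const.dist (hXmeas i))
  have hjoint : ∀ (n : ℕ), 0 < n →
      Measurable (fun p : M × Ω => infDist p.1 ((fun i => X i p.2) '' Set.Iio n)) := by
    intro n hn
    have heq : (fun p : M × Ω => infDist p.1 ((fun i => X i p.2) '' Set.Iio n)) =
        fun p : M × Ω => (Finset.range n).inf' (Finset.nonempty_range_iff.2 hn.ne')
          (fun i => dist p.1 (X i p.2)) := funext fun p => infDist_image_Iio _ hn p.1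
    rw [heq]
    exact measurable_finset_inf' hn _
      (fun i => measurable_fst.dist ((hXmeas i).comp measurable_snd))
  -- the ENNReal-valued inner integral
  set A : ℕ → Ω → ℝ≥0∞ := fun n ω =>
    ∫⁻ x, (ENNReal.ofReal (infDist x ((fun i => X i ω) '' Set.Iio n))) ^ γ ∂vol with hAdef
  have hrw : ∀ (n : ℕ), 0 < n →
      (∫⁻ ω, ENNReal.ofReal
        ((∫ x, infDist x ((fun i => X i ω) '' Set.Iio n) ^ γ ∂vol) ^ (α / γ)) ∂Pr)
      = ∫⁻ ω, (A n ω) ^ (α / γ) ∂Pr := by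
    intro n hn
    refine lintegral_congr fun ω => ?_
    have hcont : Continuous (fun x : M => infDist x ((fun i => X i ω) '' Set.Iio n) ^ γ) :=
      (continuous_infDist_pt _).rpow_const (fun x => Or.inr hγ.le)
    have hint : Integrable (fun x : M => infDist x ((fun i => X i ω) '' Set.Iio n) ^ γ) vol :=
      hcont.integrable_of_hasCompactSupport (isClosed_tsupport _).isCompact
    have hnn : 0 ≤ ∫ x, infDist x ((fun i => X i ω) '' Set.Iio n) ^ γ ∂vol :=
      integral_nonneg fun x => Real.rpow_nonneg infDist_nonneg _
    rw [← ENNReal.ofReal_rpow_of_nonneg hnn (div_nonneg hα.le hγ.le)]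
    congr 1
    rw [ofReal_integral_eq_lintegral_ofReal hint
      (Filter.Eventually.of_forall fun x => Real.rpow_nonneg infDist_nonneg _)]
    exact lintegral_congr fun x =>
      (ENNReal.ofReal_rpow_of_nonneg infDist_nonneg hγ.le).symm
  -- tail estimate
  set κ : ℝ := unitBallVol d / (2 * V) with hκdef
  have hκ : 0 < κ := by positivity
  have htail : ∀ (n : ℕ) (x : M) (t : ℝ), 0 < t → t < r₀ →
      Pr {ω | t ≤ infDist x ((fun i => X i ω) '' Set.Iio n)} ≤
        ENNReal.ofReal (Real.exp (-((n:ℝ) * (κ * t ^ d)))) := by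
    intro n x t ht htr
    have hBmeas : MeasurableSet (ball x t) := measurableSet_ball
    haveI hμprob : IsProbabilityMeasure ((vol Set.univ)⁻¹ • vol : Measure M) := ⟨by
      rw [Measure.smul_apply, smul_eq_mul]
      exact ENNReal.inv_mul_cancel hvol_ne hvol_ne_top⟩
    set m : ℝ := (((vol Set.univ)⁻¹ • vol : Measure M) (ball x t)).toReal with hmdef
    have hμB_ne_top : ((vol Set.univ)⁻¹ • vol : Measure M) (ball x t) ≠ ∞ := measure_ne_top _ _
    have hm0 : 0 ≤ m := ENNReal.toReal_nonneg
    have hm_ge : κ * t ^ d ≤ m := by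
      rw [hmdef, Measure.smul_apply, smul_eq_mul, ENNReal.toReal_mul, ENNReal.toReal_inv]
      have h1 := hlow t ht htr x
      have h2 : κ * t ^ d = V⁻¹ * (unitBallVol d * t ^ d / 2) := by
        rw [hκdef]; field_simp
      rw [h2, ← hVdef]
      exact mul_le_mul_of_nonneg_left h1 (inv_nonneg.2 hV.le)
    have hsub : {ω | t ≤ infDist x ((fun i => X i ω) '' Set.Iio n)} ⊆
        ⋂ i ∈ Finset.range n, X i ⁻¹' (ball x t)ᶜ := by
      intro ω hω
      simp only [Set.mem_iInter, Finset.mem_range, Set.mem_preimage, Set.mem_compl_iff,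
        mem_ball]
      intro i hi hcon
      have h3 : infDist x ((fun i => X i ω) '' Set.Iio n) ≤ dist x (X i ω) :=
        infDist_le_dist_of_mem ⟨i, hi, rfl⟩
      rw [dist_comm] at hcon
      have h4 : t ≤ dist x (X i ω) := le_trans hω h3
      linarith
    refine le_trans (measure_mono hsub) ?_
    have hprod := hXindep.meas_biInter (S := Finset.range n) (s := fun i => X i ⁻¹' (ball x t)ᶜ)
      (fun i _ => ⟨(ball x t)ᶜ, hBmeas.compl, rfl⟩)
    rw [hprod]
    have hmap : ∀ i : ℕ, Pr (X i ⁻¹' (ball x t)ᶜ) =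
        ((vol Set.univ)⁻¹ • vol : Measure M) (ball x t)ᶜ := fun i => by
      rw [← hXlaw i, Measure.map_apply (hXmeas i) hBmeas.compl]
    have hcompl : ((vol Set.univ)⁻¹ • vol : Measure M) (ball x t)ᶜ =
        1 - ((vol Set.univ)⁻¹ • vol : Measure M) (ball x t) := by
      rw [measure_compl hBmeas (measure_ne_top _ _), measure_univ]
    have hbase : (1 : ℝ≥0∞) - ((vol Set.univ)⁻¹ • vol : Measure M) (ball x t) ≤
        ENNReal.ofReal (Real.exp (-m)) := by
      have h5 : (1 : ℝ≥0∞) - ((vol Set.univ)⁻¹ • vol : Measure M) (ball x t)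
          = ENNReal.ofReal (1 - m) := by
        rw [ENNReal.ofReal_sub _ hm0, ENNReal.ofReal_one, hmdef,
          ENNReal.ofReal_toReal hμB_ne_top]
      rw [h5]
      apply ENNReal.ofReal_le_ofReal
      have h6 := Real.add_one_le_exp (-m)
      linarith
    calc ∏ i ∈ Finset.range n, Pr (X i ⁻¹' (ball x t)ᶜ)
        = (1 - ((vol Set.univ)⁻¹ • vol : Measure M) (ball x t)) ^ n := by
          rw [Finset.prod_congr rfl (fun i _ => by rw [hmap i, hcompl]), Finset.prod_const,
            Finset.card_range]
      _ ≤ ENNReal.ofReal (Real.exp (-m)) ^ n := pow_le_pow_left' hbase n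
      _ = ENNReal.ofReal (Real.exp (-((n:ℝ) * m))) := by
          rw [← ENNReal.ofReal_pow (Real.exp_nonneg _), ← Real.exp_nat_mul]
          congr 1
          ring
      _ ≤ ENNReal.ofReal (Real.exp (-((n:ℝ) * (κ * t ^ d)))) := by
          apply ENNReal.ofReal_le_ofReal
          apply Real.exp_le_exp.2
          have h7 : (n:ℝ) * (κ * t ^ d) ≤ (n:ℝ) * m :=
            mul_le_mul_of_nonneg_left hm_ge (Nat.cast_nonneg n)
          linarith
  -- Tonelli swap
  have hswap : ∀ (n : ℕ), 0 < n → ∀ s : ℝ,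
      ∫⁻ ω, ∫⁻ x, (ENNReal.ofReal (infDist x ((fun i => X i ω) '' Set.Iio n))) ^ s ∂vol ∂Pr
      = ∫⁻ x, ∫⁻ ω, (ENNReal.ofReal (infDist x ((fun i => X i ω) '' Set.Iio n))) ^ s ∂Pr ∂vol := by
    intro n hn s
    apply lintegral_lintegral_swap
    exact (((hjoint n hn).comp measurable_swap).ennreal_ofReal.pow_const s).aemeasurable
  obtain ⟨C₁, hC₁, hmom₁⟩ := moment_bound Pr γ hγ d hd hκ hr₀ hD
  obtain ⟨C₂, hC₂, hmom₂⟩ := moment_bound Pr α hα d hd hκ hr₀ hD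
  have hinner₁ : ∀ (n : ℕ), 0 < n → ∀ x : M,
      ∫⁻ ω, (ENNReal.ofReal (infDist x ((fun i => X i ω) '' Set.Iio n))) ^ γ ∂Pr
        ≤ ENNReal.ofReal (C₁ * (n:ℝ) ^ (-γ/(d:ℝ))) := fun n hn x =>
    hmom₁ n hn _ (hZmeasω n hn x) (fun ω => infDist_nonneg) (fun ω => hZD n hn ω x)
      (fun t ht htr => htail n x t ht htr)
  have hinner₂ : ∀ (n : ℕ), 0 < n → ∀ x : M,
      ∫⁻ ω, (ENNReal.ofReal (infDist x ((fun i => X i ω) '' Set.Iio n))) ^ α ∂Pr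
        ≤ ENNReal.ofReal (C₂ * (n:ℝ) ^ (-α/(d:ℝ))) := fun n hn x =>
    hmom₂ n hn _ (hZmeasω n hn x) (fun ω => infDist_nonneg) (fun ω => hZD n hn ω x)
      (fun t ht htr => htail n x t ht htr)
  have hdouble : ∀ (n : ℕ), 0 < n → ∀ (s Cs : ℝ), 0 < Cs →
      (∀ x : M, ∫⁻ ω, (ENNReal.ofReal (infDist x ((fun i => X i ω) '' Set.Iio n))) ^ s ∂Pr
        ≤ ENNReal.ofReal (Cs * (n:ℝ) ^ (-s/(d:ℝ)))) →
      ∫⁻ ω, ∫⁻ x, (ENNReal.ofReal (infDist x ((fun i => X i ω) '' Set.Iio n))) ^ s ∂vol ∂Pr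
        ≤ ENNReal.ofReal (Cs * V * (n:ℝ) ^ (-s/(d:ℝ))) := by
    intro n hn s Cs hCs hin
    rw [hswap n hn s]
    calc ∫⁻ x, ∫⁻ ω, (ENNReal.ofReal (infDist x ((fun i => X i ω) '' Set.Iio n))) ^ s ∂Pr ∂vol
        ≤ ∫⁻ _x, ENNReal.ofReal (Cs * (n:ℝ) ^ (-s/(d:ℝ))) ∂vol := lintegral_mono fun x => hin x
      _ = ENNReal.ofReal (Cs * (n:ℝ) ^ (-s/(d:ℝ))) * vol Set.univ := lintegral_const _
      _ = ENNReal.ofReal (Cs * V * (n:ℝ) ^ (-s/(d:ℝ))) := by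
          rw [← ENNReal.ofReal_toReal hvol_ne_top, ← hVdef,
            ← ENNReal.ofReal_mul (by positivity)]
          congr 1
          ring
  -- lower bound
  set s₀ : ℝ := min (r₀/2) ((V/(3 * unitBallVol d)) ^ ((1:ℝ)/(d:ℝ))) with hs₀def
  have hs₀ : 0 < s₀ := lt_min (by positivity) (Real.rpow_pos_of_pos (by positivity) _)
  set clow : ℝ := s₀ ^ α * (V/2) ^ (α/γ) with hclowdef
  have hclow : 0 < clow := by positivity
  have hlower : ∀ n : ℕ, 0 < n →
      ENNReal.ofReal (clow * (n:ℝ) ^ (-α/(d:ℝ))) ≤ ∫⁻ ω, (A n ω) ^ (α/γ) ∂Pr := by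
    intro n hn
    have hn1 : (1:ℝ) ≤ (n:ℝ) := by exact_mod_cast hn
    have hnpos : (0:ℝ) < (n:ℝ) := by linarith
    set t : ℝ := s₀ * (n:ℝ) ^ (-(1:ℝ)/(d:ℝ)) with htdef
    have ht : 0 < t := by positivity
    have hexp1 : (n:ℝ) ^ (-(1:ℝ)/(d:ℝ)) ≤ 1 := by
      apply Real.rpow_le_one_of_one_le_of_nonpos hn1
      rw [neg_div]
      exact neg_nonpos.mpr (by positivity)
    have htr₀ : t < r₀ := by
      have h1 : t ≤ s₀ := by
        calc t ≤ s₀ * 1 := mul_le_mul_of_nonneg_left hexp1 hs₀.le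
          _ = s₀ := mul_one _
      have h2 : s₀ ≤ r₀/2 := min_le_left _ _
      linarith
    have hnr : (n:ℝ) * ((n:ℝ) ^ (-(1:ℝ)/(d:ℝ))) ^ d = 1 := by
      have hne : ((n:ℝ) ^ (-(1:ℝ)/(d:ℝ))) ^ d = (n:ℝ)⁻¹ := by
        rw [← Real.rpow_natCast ((n:ℝ) ^ (-(1:ℝ)/(d:ℝ))) d, ← Real.rpow_mul hnpos.le,
          div_mul_cancel₀ _ hdR.ne']
        rw [show (-1 : ℝ) = -(1:ℝ) from rfl, Real.rpow_neg hnpos.le, Real.rpow_one]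
      rw [hne, mul_inv_cancel₀ hnpos.ne']
    have hptlow : ∀ ω, ENNReal.ofReal (clow * (n:ℝ)^(-α/(d:ℝ))) ≤ (A n ω) ^ (α/γ) := by
      intro ω
      set U : Set M := ⋃ i ∈ Finset.range n, ball (X i ω) t with hUdef
      have hUmeas : MeasurableSet U :=
        Finset.measurableSet_biUnion _ (fun i _ => measurableSet_ball)
      have hUvol : vol U ≤ ENNReal.ofReal (V/2) := by
        calc vol U ≤ ∑ i ∈ Finset.range n, vol (ball (X i ω) t) := measure_biUnion_finset_le _ _
          _ ≤ ∑ _i ∈ Finset.range n, ENNReal.ofReal (3/2 * (unitBallVol d * t ^ d)) := by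
              refine Finset.sum_le_sum fun i _ => ?_
              rw [← ENNReal.ofReal_toReal (measure_ne_top vol _)]
              exact ENNReal.ofReal_le_ofReal (hup t ht htr₀ _)
          _ = (n : ℝ≥0∞) * ENNReal.ofReal (3/2 * (unitBallVol d * t ^ d)) := by
              rw [Finset.sum_const, Finset.card_range, nsmul_eq_mul]
          _ = ENNReal.ofReal ((n:ℝ) * (3/2 * (unitBallVol d * t ^ d))) := by
              rw [ENNReal.ofReal_mul (Nat.cast_nonneg n), ENNReal.ofReal_natCast]
          _ ≤ ENNReal.ofReal (V/2) := by
              apply ENNReal.ofReal_le_ofReal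
              have hsd : s₀ ^ d ≤ V / (3 * unitBallVol d) := by
                have h2 : s₀ ≤ (V/(3 * unitBallVol d)) ^ ((1:ℝ)/(d:ℝ)) := min_le_right _ _
                calc s₀ ^ d ≤ ((V/(3 * unitBallVol d)) ^ ((1:ℝ)/(d:ℝ))) ^ d :=
                      pow_le_pow_left₀ hs₀.le h2 d
                  _ = V/(3*unitBallVol d) := by
                      rw [← Real.rpow_natCast ((V/(3 * unitBallVol d)) ^ ((1:ℝ)/(d:ℝ))) d,
                        ← Real.rpow_mul (by positivity), one_div,
                        inv_mul_cancel₀ hdR.ne', Real.rpow_one]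
              calc (n:ℝ) * (3/2 * (unitBallVol d * t^d))
                  = 3/2 * unitBallVol d * s₀^d * ((n:ℝ) * ((n:ℝ)^(-(1:ℝ)/(d:ℝ)))^d) := by
                    rw [htdef, mul_pow]; ring
                _ = 3/2 * unitBallVol d * s₀^d := by rw [hnr, mul_one]
                _ ≤ 3/2 * unitBallVol d * (V/(3*unitBallVol d)) := by
                    apply mul_le_mul_of_nonneg_left hsd (by positivity)
                _ = V/2 := by field_simp
      have hcompl : ∀ x : M, x ∉ U → ENNReal.ofReal (t ^ γ) ≤
          (ENNReal.ofReal (infDist x ((fun i => X i ω) '' Set.Iio n))) ^ γ := by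
        intro x hx
        have h3 : t ≤ infDist x ((fun i => X i ω) '' Set.Iio n) := by
          rw [infDist_image_Iio _ hn x]
          apply Finset.le_inf'
          intro i hi
          by_contra hcon
          push_neg at hcon
          refine hx (Set.mem_biUnion hi ?_)
          rw [mem_ball]
          exact hcon
        rw [ENNReal.ofReal_rpow_of_nonneg infDist_nonneg hγ.le]
        exact ENNReal.ofReal_le_ofReal (Real.rpow_le_rpow ht.le h3 hγ.le)
      have hAlow : ENNReal.ofReal (t ^ γ * (V/2)) ≤ A n ω := by
        have hvolc : ENNReal.ofReal (V/2) ≤ vol Uᶜ := by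
          have h4 : vol Uᶜ = vol Set.univ - vol U := measure_compl hUmeas (measure_ne_top _ _)
          have h5 : vol Set.univ = ENNReal.ofReal V := by
            rw [hVdef, ENNReal.ofReal_toReal hvol_ne_top]
          rw [h4, h5]
          calc ENNReal.ofReal (V/2) = ENNReal.ofReal (V - V/2) := by congr 1; ring
            _ = ENNReal.ofReal V - ENNReal.ofReal (V/2) := ENNReal.ofReal_sub _ (by positivity)
            _ ≤ ENNReal.ofReal V - vol U := tsub_le_tsub_left hUvol _
        calc ENNReal.ofReal (t^γ * (V/2))
            = ENNReal.ofReal (t^γ) * ENNReal.ofReal (V/2) :=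
              ENNReal.ofReal_mul (by positivity)
          _ ≤ ENNReal.ofReal (t^γ) * vol Uᶜ := mul_le_mul_right hvolc _
          _ = ∫⁻ x, Uᶜ.indicator (fun _ => ENNReal.ofReal (t^γ)) x ∂vol := by
              rw [lintegral_indicator_const hUmeas.compl]
          _ ≤ A n ω := by
              simp only [hAdef]
              apply lintegral_mono
              intro x
              by_cases hx : x ∈ Uᶜ
              · rw [Set.indicator_of_mem hx]
                exact hcompl x hx
              · rw [Set.indicator_of_notMem hx]
                exact zero_le
      calc ENNReal.ofReal (clow * (n:ℝ)^(-α/(d:ℝ)))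
          = ENNReal.ofReal ((t^γ * (V/2)) ^ (α/γ)) := by
            congr 1
            rw [Real.mul_rpow (by positivity) (by positivity)]
            have e1 : (t ^ γ) ^ (α/γ) = t ^ α := by
              rw [← Real.rpow_mul ht.le]
              congr 1
              field_simp
            have e2 : t ^ α = s₀ ^ α * ((n:ℝ) ^ (-α/(d:ℝ))) := by
              rw [htdef, Real.mul_rpow hs₀.le (by positivity), ← Real.rpow_mul hnpos.le]
              congr 1
              ring
            rw [e1, e2, hclowdef]
            ring
        _ = (ENNReal.ofReal (t^γ * (V/2))) ^ (α/γ) :=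
            (ENNReal.ofReal_rpow_of_pos (by positivity)).symm
        _ ≤ (A n ω) ^ (α/γ) := ENNReal.rpow_le_rpow hAlow (by positivity)
    calc ENNReal.ofReal (clow * (n:ℝ)^(-α/(d:ℝ)))
        = ∫⁻ _ω, ENNReal.ofReal (clow * (n:ℝ)^(-α/(d:ℝ))) ∂Pr := by
          rw [lintegral_const, measure_univ, mul_one]
      _ ≤ ∫⁻ ω, (A n ω)^(α/γ) ∂Pr := lintegral_mono hptlow
  -- upper bound
  have hAmeas : ∀ (n : ℕ), 0 < n → ∀ s : ℝ, Measurable (fun ω =>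
      ∫⁻ x, (ENNReal.ofReal (infDist x ((fun i => X i ω) '' Set.Iio n))) ^ s ∂vol) := by
    intro n hn s
    apply Measurable.lintegral_prod_left
    exact ((hjoint n hn).ennreal_ofReal).pow_const s
  have hupper : ∃ Cu : ℝ, 0 < Cu ∧ ∀ n : ℕ, 0 < n →
      ∫⁻ ω, (A n ω) ^ (α/γ) ∂Pr ≤ ENNReal.ofReal (Cu * (n:ℝ) ^ (-α/(d:ℝ))) := by
    rcases le_or_gt α γ with hle | hlt
    · -- case α ≤ γ
      refine ⟨2 * (C₁ * V) ^ (α/γ), by positivity, fun n hn => ?_⟩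
      have hn1 : (1:ℝ) ≤ (n:ℝ) := by exact_mod_cast hn
      have hnpos : (0:ℝ) < (n:ℝ) := by linarith
      set q : ℝ := α/γ with hqdef
      have hq0 : 0 < q := by positivity
      have hq1 : q ≤ 1 := by rw [hqdef, div_le_one hγ]; exact hle
      set ε : ℝ := C₁ * V * (n:ℝ) ^ (-γ/(d:ℝ)) with hεdef
      have hε : 0 < ε := by positivity
      have he0 : ENNReal.ofReal ε ≠ 0 := (ENNReal.ofReal_pos.2 hε).ne'
      have heT : ENNReal.ofReal ε ≠ ∞ := ENNReal.ofReal_ne_top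
      have hAne : ∀ ω, A n ω ≠ ∞ := by
        intro ω
        have hb : A n ω ≤ ENNReal.ofReal (D ^ γ) * vol Set.univ := by
          simp only [hAdef]
          calc ∫⁻ x, (ENNReal.ofReal (infDist x ((fun i => X i ω) '' Set.Iio n))) ^ γ ∂vol
              ≤ ∫⁻ _x, ENNReal.ofReal (D ^ γ) ∂vol := by
                refine lintegral_mono fun x => ?_
                rw [ENNReal.ofReal_rpow_of_nonneg infDist_nonneg hγ.le]
                exact ENNReal.ofReal_le_ofReal
                  (Real.rpow_le_rpow infDist_nonneg (hZD n hn ω x) hγ.le)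
            _ = ENNReal.ofReal (D ^ γ) * vol Set.univ := lintegral_const _
        exact (lt_of_le_of_lt hb (ENNReal.mul_lt_top ENNReal.ofReal_lt_top
          (measure_lt_top vol _))).ne
      have hpt2 : ∀ ω, (A n ω) ^ q ≤
          ENNReal.ofReal ε ^ q + ENNReal.ofReal ε ^ (q-1) * A n ω := by
        intro ω
        rcases le_total (A n ω) (ENNReal.ofReal ε) with h | h
        · exact le_trans (ENNReal.rpow_le_rpow h hq0.le) le_self_add
        · have hA0 : A n ω ≠ 0 := by
            intro h0
            rw [h0] at h
            exact he0 (le_antisymm h zero_le)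
          have h9 : A n ω ^ q = A n ω ^ (q-1) * A n ω := by
            have h8 := ENNReal.rpow_add (x := A n ω) (q-1) 1 hA0 (hAne ω)
            rw [ENNReal.rpow_one] at h8
            rw [← h8]
            congr 1
            ring
          rw [h9]
          have h10 : A n ω ^ (q-1) ≤ ENNReal.ofReal ε ^ (q-1) := by
            rw [show q-1 = -(1-q) by ring, ENNReal.rpow_neg, ENNReal.rpow_neg]
            exact ENNReal.inv_le_inv' (ENNReal.rpow_le_rpow h (by linarith))
          exact le_trans (mul_le_mul_left h10 _) le_add_self
      have hAint : ∫⁻ ω, A n ω ∂Pr ≤ ENNReal.ofReal ε := by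
        rw [hεdef]
        simp only [hAdef]
        exact hdouble n hn γ C₁ hC₁ (hinner₁ n hn)
      have hexp : (-γ/(d:ℝ)) * q = -α/(d:ℝ) := by
        rw [hqdef]
        field_simp
      have hεq : ε ^ q = (C₁ * V) ^ q * (n:ℝ) ^ (-α/(d:ℝ)) := by
        rw [hεdef, Real.mul_rpow (by positivity) (by positivity),
          ← Real.rpow_mul hnpos.le, hexp]
      calc ∫⁻ ω, (A n ω) ^ q ∂Pr
          ≤ ∫⁻ ω, (ENNReal.ofReal ε ^ q + ENNReal.ofReal ε ^ (q-1) * A n ω) ∂Pr :=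
            lintegral_mono hpt2
        _ = ENNReal.ofReal ε ^ q + ENNReal.ofReal ε ^ (q-1) * ∫⁻ ω, A n ω ∂Pr := by
            rw [lintegral_add_left measurable_const,
              lintegral_const_mul _ (hAmeas n hn γ), lintegral_const, measure_univ, mul_one]
        _ ≤ ENNReal.ofReal ε ^ q + ENNReal.ofReal ε ^ (q-1) * ENNReal.ofReal ε :=
            add_le_add_right (mul_le_mul_right hAint _) _
        _ = ENNReal.ofReal ε ^ q + ENNReal.ofReal ε ^ q := by
            congr 1
            have h8 := ENNReal.rpow_add (x := ENNReal.ofReal ε) (q-1) 1 he0 heT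
            rw [ENNReal.rpow_one] at h8
            rw [← h8]
            congr 1
            ring
        _ = 2 * ENNReal.ofReal ε ^ q := by rw [two_mul]
        _ = ENNReal.ofReal (2 * ε ^ q) := by
            rw [ENNReal.ofReal_rpow_of_pos hε,
              ENNReal.ofReal_mul (by norm_num : (0:ℝ) ≤ 2), ENNReal.ofReal_ofNat]
        _ ≤ ENNReal.ofReal (2 * (C₁ * V) ^ q * (n:ℝ) ^ (-α/(d:ℝ))) := by
            refine ENNReal.ofReal_le_ofReal (le_of_eq ?_)
            rw [hεq]
            ring
    · -- case γ < α
      have hp1 : 1 < α/γ := (one_lt_div hγ).2 hlt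
      set p : ℝ := α/γ with hpdef
      have hp0 : 0 < p := lt_trans one_pos hp1
      set cq : ℝ := Real.conjExponent p with hcqdef
      have hpq : p.HolderConjugate cq := Real.HolderConjugate.conjExponent hp1
      refine ⟨V ^ ((1/cq) * p) * (C₂ * V), by positivity, fun n hn => ?_⟩
      have hγp : γ * p = α := by rw [hpdef]; field_simp
      have hhold : ∀ ω, (A n ω) ^ p ≤ (vol Set.univ) ^ ((1/cq) * p) *
          ∫⁻ x, (ENNReal.ofReal (infDist x ((fun i => X i ω) '' Set.Iio n))) ^ α ∂vol := by
        intro ω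
        have hmu : Measurable fun x : M =>
            (ENNReal.ofReal (infDist x ((fun i => X i ω) '' Set.Iio n))) ^ γ :=
          ((continuous_infDist_pt _).measurable.ennreal_ofReal).pow_const γ
        have h1 := ENNReal.lintegral_mul_le_Lp_mul_Lq vol hpq hmu.aemeasurable
          (aemeasurable_const (b := (1:ℝ≥0∞)))
        simp only [Pi.mul_apply, mul_one, ENNReal.one_rpow, lintegral_one] at h1
        simp_rw [← ENNReal.rpow_mul, hγp] at h1
        calc (A n ω) ^ p
            ≤ ((∫⁻ x, (ENNReal.ofReal (infDist x ((fun i => X i ω) '' Set.Iio n))) ^ α ∂vol)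
                ^ (1/p) * (vol Set.univ) ^ (1/cq)) ^ p := by
              refine ENNReal.rpow_le_rpow ?_ hp0.le
              simp only [hAdef]
              exact h1
          _ = (vol Set.univ) ^ ((1/cq) * p) *
              ∫⁻ x, (ENNReal.ofReal (infDist x ((fun i => X i ω) '' Set.Iio n))) ^ α ∂vol := by
              rw [ENNReal.mul_rpow_of_nonneg _ _ hp0.le, ← ENNReal.rpow_mul,
                ← ENNReal.rpow_mul, one_div_mul_cancel hp0.ne', ENNReal.rpow_one]
              exact mul_comm _ _
      calc ∫⁻ ω, (A n ω) ^ p ∂Pr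
          ≤ ∫⁻ ω, (vol Set.univ) ^ ((1/cq) * p) *
              ∫⁻ x, (ENNReal.ofReal (infDist x ((fun i => X i ω) '' Set.Iio n))) ^ α ∂vol ∂Pr :=
            lintegral_mono hhold
        _ = (vol Set.univ) ^ ((1/cq) * p) *
            ∫⁻ ω, ∫⁻ x, (ENNReal.ofReal (infDist x ((fun i => X i ω) '' Set.Iio n))) ^ α
              ∂vol ∂Pr := lintegral_const_mul _ (hAmeas n hn α)
        _ ≤ (vol Set.univ) ^ ((1/cq) * p) * ENNReal.ofReal (C₂ * V * (n:ℝ)^(-α/(d:ℝ))) :=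
            mul_le_mul_right (hdouble n hn α C₂ hC₂ (hinner₂ n hn)) _
        _ ≤ ENNReal.ofReal (V ^ ((1/cq) * p) * (C₂ * V) * (n:ℝ)^(-α/(d:ℝ))) := by
            have hvu : (vol Set.univ : ℝ≥0∞) = ENNReal.ofReal V := by
              rw [hVdef, ENNReal.ofReal_toReal hvol_ne_top]
            rw [hvu, ENNReal.ofReal_rpow_of_pos hV, ← ENNReal.ofReal_mul (by positivity)]
            exact ENNReal.ofReal_le_ofReal (le_of_eq (by ring))
  obtain ⟨Cu, hCu, hub⟩ := hupper
  refine ⟨clow, max Cu clow, hclow, le_max_right _ _, fun n hn => ?_⟩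
  constructor
  · rw [hrw n hn]
    exact hlower n hn
  · rw [hrw n hn]
    refine le_trans (hub n hn) (ENNReal.ofReal_le_ofReal ?_)
    exact mul_le_mul_of_nonneg_right (le_max_left _ _)
      (Real.rpow_nonneg (Nat.cast_nonneg n) _)
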